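/- For all integers 0 ≤ k ≤ ℓ ≤ q, g(k,ℓ,q) ≥ 0. -/

import Mathlib

noncomputable section

namespace ED

/-- `g(k,ℓ,q) = Σ_{(y₁,…,y_k) ∈ [ℓ]^k, pairwise distinct} ∏ᵢ (q·[yᵢ = i] − 1)`. -/
def g (k ℓ q : ℕ) : ℝ :=
  ∑ y ∈ Finset.univ.filter (fun y : Fin k → Fin ℓ => Function.Injective y),
    ∏ i, ((q : ℝ) * (if (y i : ℕ) = (i : ℕ) then 1 else 0) - 1)

end ED

open Finset

/-- Auxiliary polynomial `T(k,c,q) = Σⱼ (-1)ʲ C(k,j) q^(k-j) (j+c)!`. -/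
def Taux (k c : ℕ) (q : ℝ) : ℝ :=
  ∑ j ∈ Finset.range (k + 1),
    (-1 : ℝ) ^ j * (k.choose j) * q ^ (k - j) * ((j + c).factorial : ℝ)

lemma Taux_zero (c : ℕ) (q : ℝ) : Taux 0 c q = (c.factorial : ℝ) := by
  simp [Taux]

lemma Taux_one (c : ℕ) (q : ℝ) :
    Taux 1 c q = (q - (c + 1)) * (c.factorial : ℝ) := by
  have h : 1 + c = c + 1 := by omega
  simp only [Taux, Finset.sum_range_succ, Finset.sum_range_one, h, Nat.factorial_succ, Nat.choose_self, Nat.choose_zero_right]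
  push_cast
  ring

lemma Taux_rec (k c : ℕ) (q : ℝ) :
    Taux (k + 2) c q = (q - (c + 1)) * Taux (k + 1) c q + (k + 1) * Taux k (c + 1) q := by
  have hA : (∑ j ∈ range (k + 2 + 1),
      (-1:ℝ)^j * ((k+1).choose j) * q^(k+2-j) * ((j+c).factorial : ℝ))
      = q * Taux (k+1) c q := by
    rw [Finset.sum_range_succ]
    have h0 : (((k+1).choose (k+2) : ℕ) : ℝ) = 0 := by
      norm_cast
      exact Nat.choose_eq_zero_of_lt (by omega)
    rw [h0]
    simp only [mul_zero, zero_mul, add_zero]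
    rw [Taux, Finset.mul_sum]
    apply Finset.sum_congr rfl
    intro j hj
    have hj' : j < k + 2 := Finset.mem_range.mp hj
    have he : k + 2 - j = (k + 1 - j) + 1 := by omega
    rw [he, pow_succ]
    ring
  have hC : (∑ i ∈ range (k+2),
      (i:ℝ) * ((-1:ℝ)^i * ((k+1).choose i) * q^(k+1-i) * ((i+c).factorial : ℝ)))
      = -(((k:ℝ)+1) * Taux k (c+1) q) := by
    rw [Finset.sum_range_succ']
    simp only [Nat.cast_zero, zero_mul, add_zero]
    rw [Taux, Finset.mul_sum, ← Finset.sum_neg_distrib]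
    apply Finset.sum_congr rfl
    intro m hm
    have hm' : m < k + 1 := Finset.mem_range.mp hm
    have hch : ((m:ℝ)+1) * (((k+1).choose (m+1) : ℕ) : ℝ) = ((k:ℝ)+1) * ((k.choose m : ℕ) : ℝ) := by
      have h := Nat.add_one_mul_choose_eq k m
      have h' : ((Nat.succ k * k.choose m : ℕ) : ℝ) = (((k+1).choose (m+1) * (m+1) : ℕ) : ℝ) := by
        rw [h]
      push_cast at h'
      linarith
    have h1 : k + 1 - (m+1) = k - m := by omega
    have h2 : m + 1 + c = m + (c + 1) := by omega
    rw [h1, h2, pow_succ]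
    push_cast
    linear_combination (-((-1:ℝ)^m * q^(k-m) * ((m+(c+1)).factorial : ℝ))) * hch
  have hB : (∑ i ∈ range (k + 2),
      (-1:ℝ)^(i+1) * ((k+1).choose i) * q^(k+1-i) * (((i+1+c).factorial : ℝ)))
      = -((c:ℝ)+1) * Taux (k+1) c q + ((k:ℝ)+1) * Taux k (c+1) q := by
    have expand : ∀ i, (-1:ℝ)^(i+1) * ((k+1).choose i) * q^(k+1-i) * (((i+1+c).factorial : ℝ))
        = -(((c:ℝ)+1) * ((-1:ℝ)^i * ((k+1).choose i) * q^(k+1-i) * ((i+c).factorial : ℝ)))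
          - (i:ℝ) * ((-1:ℝ)^i * ((k+1).choose i) * q^(k+1-i) * ((i+c).factorial : ℝ)) := by
      intro i
      have hf : (i+1+c).factorial = (i+c+1) * (i+c).factorial := by
        rw [show i+1+c = (i+c)+1 by omega, Nat.factorial_succ]
      rw [hf, pow_succ]
      push_cast
      ring
    have hD : (∑ i ∈ range (k+2),
        -(((c:ℝ)+1) * ((-1:ℝ)^i * ((k+1).choose i) * q^(k+1-i) * ((i+c).factorial : ℝ))))
        = -(((c:ℝ)+1) * Taux (k+1) c q) := by
      rw [Taux, Finset.mul_sum, ← Finset.sum_neg_distrib]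
    rw [Finset.sum_congr rfl (fun i _ => expand i), Finset.sum_sub_distrib, hC, hD]
    ring
  rw [Taux, Finset.sum_range_succ']
  have split : ∀ i ∈ range (k+2),
      (-1:ℝ)^(i+1) * (((k+2).choose (i+1) : ℕ) : ℝ) * q^(k+2-(i+1)) * (((i+1)+c).factorial : ℝ)
      = (-1:ℝ)^(i+1) * ((k+1).choose (i+1)) * q^(k+2-(i+1)) * (((i+1)+c).factorial : ℝ)
        + (-1:ℝ)^(i+1) * ((k+1).choose i) * q^(k+1-i) * ((i+1+c).factorial : ℝ) := by
    intro i _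
    have hcs : (k+2).choose (i+1) = (k+1).choose i + (k+1).choose (i+1) := by
      rw [show k+2 = (k+1)+1 by omega]
      exact Nat.choose_succ_succ (k+1) i
    have he2 : k + 2 - (i+1) = k + 1 - i := by omega
    rw [hcs, he2]
    push_cast
    ring
  rw [Finset.sum_congr rfl split, Finset.sum_add_distrib]
  have hfirst : (∑ i ∈ range (k+2),
      (-1:ℝ)^(i+1) * (((k+1).choose (i+1) : ℕ) : ℝ) * q^(k+2-(i+1)) * (((i+1)+c).factorial : ℝ))
      + (-1:ℝ)^0 * (((k+2).choose 0 : ℕ) : ℝ) * q^(k+2-0) * ((0+c).factorial : ℝ)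
      = q * Taux (k+1) c q := by
    have hA' := hA
    rw [Finset.sum_range_succ'] at hA'
    rw [← hA']
    norm_num
  linear_combination hfirst + hB

lemma Taux_nonneg (k : ℕ) : ∀ c : ℕ, ∀ q : ℝ, ((k + c : ℕ) : ℝ) ≤ q → 0 ≤ Taux k c q := by
  induction k using Nat.strong_induction_on with
  | _ k ih =>
    intro c q hq
    match k with
    | 0 => rw [Taux_zero]; positivity
    | 1 =>
      rw [Taux_one]
      apply mul_nonneg
      · have : ((1 + c : ℕ) : ℝ) = (c : ℝ) + 1 := by push_cast; ring
        linarith [this ▸ hq]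
      · positivity
    | (k + 2) =>
      rw [Taux_rec]
      have h1 : 0 ≤ Taux (k + 1) c q := by
        apply ih (k + 1) (by omega) c q
        refine le_trans ?_ hq
        push_cast; linarith
      have h2 : 0 ≤ Taux k (c + 1) q := by
        apply ih k (by omega) (c + 1) q
        refine le_trans ?_ hq
        push_cast; linarith
      have h3 : (0 : ℝ) ≤ q - (c + 1) := by
        have : ((k + 2 + c : ℕ) : ℝ) = (k : ℝ) + 2 + c := by push_cast; ring
        rw [this] at hq
        linarith
      have h4 : (0 : ℝ) ≤ (k : ℝ) + 1 := by positivity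
      nlinarith

/-- Counting injections with prescribed fixed values on `t`. -/
lemma card_count {k ℓ : ℕ} (hkl : k ≤ ℓ) (t : Finset (Fin k)) :
    (Finset.univ.filter (fun y : Fin k → Fin ℓ =>
      Function.Injective y ∧ ∀ i ∈ t, (y i : ℕ) = (i : ℕ))).card
    = (ℓ - t.card).descFactorial (k - t.card) := by
  classical
  rw [← Fintype.card_subtype]
  have e : {y : Fin k → Fin ℓ // Function.Injective y ∧ ∀ i ∈ t, (y i : ℕ) = (i : ℕ)} ≃
      ({i : Fin k // i ∉ t} ↪ {v : Fin ℓ // v ∉ t.map (Fin.castLEEmb hkl)}) := by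
    refine
      { toFun := fun y => ⟨fun i => ⟨y.1 i.1, ?_⟩, ?_⟩
        invFun := fun z => ⟨fun i => if h : i ∈ t then Fin.castLE hkl i else (z ⟨i, h⟩).1,
          ?_, ?_⟩
        left_inv := ?_
        right_inv := ?_ }
    · intro hmem
      obtain ⟨j, hj, hje⟩ := Finset.mem_map.mp hmem
      have hyj : y.1 j = Fin.castLEEmb hkl j := by
        apply Fin.ext
        simpa using y.2.2 j hj
      have hval : y.1 j = y.1 i.1 := by rw [hyj, hje]
      have hji : j = i.1 := y.2.1 hval
      exact i.2 (hji ▸ hj)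
    · intro a b hab
      have hval : y.1 a.1 = y.1 b.1 := congrArg Subtype.val hab
      exact Subtype.ext (y.2.1 hval)
    · -- injectivity of invFun's function
      intro a b hab
      dsimp only at hab
      by_cases ha : a ∈ t <;> by_cases hb : b ∈ t
      · rw [dif_pos ha, dif_pos hb] at hab
        exact Fin.castLE_injective hkl hab
      · rw [dif_pos ha, dif_neg hb] at hab
        exfalso
        apply (z ⟨b, hb⟩).2
        rw [← hab]
        simpa using Finset.mem_map_of_mem (Fin.castLEEmb hkl) ha
      · rw [dif_neg ha, dif_pos hb] at hab
        exfalso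
        apply (z ⟨a, ha⟩).2
        rw [hab]
        simpa using Finset.mem_map_of_mem (Fin.castLEEmb hkl) hb
      · rw [dif_neg ha, dif_neg hb] at hab
        have : z ⟨a, ha⟩ = z ⟨b, hb⟩ := Subtype.ext hab
        have := z.injective this
        exact congrArg Subtype.val this
    · intro i hi
      dsimp only
      rw [dif_pos hi]
      simp
    · intro y
      apply Subtype.ext
      funext i
      dsimp only
      by_cases hi : i ∈ t
      · rw [dif_pos hi]
        apply Fin.ext
        simpa using (y.2.2 i hi).symm
      · rw [dif_neg hi]
        rfl
    · intro z
      apply Function.Embedding.ext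
      intro i
      apply Subtype.ext
      simp only [Function.Embedding.coeFn_mk]
      exact dif_neg i.2
  rw [Fintype.card_congr e, Fintype.card_embedding_eq]
  congr 1
  · rw [Fintype.card_subtype_compl, Fintype.card_fin, Fintype.card_coe,
      Finset.card_map]
  · rw [Fintype.card_subtype_compl, Fintype.card_fin, Fintype.card_coe]

open ED in
lemma g_closed (k ℓ q : ℕ) (hkl : k ≤ ℓ) :
    ((ℓ - k).factorial : ℝ) * g k ℓ q = Taux k (ℓ - k) q := by
  classical
  have step1 : g k ℓ q = ∑ t ∈ (Finset.univ : Finset (Fin k)).powerset,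
      (-1:ℝ)^(k - t.card) * (q:ℝ)^t.card
        * (((ℓ - t.card).descFactorial (k - t.card) : ℕ) : ℝ) := by
    rw [ED.g]
    have hprod : ∀ y : Fin k → Fin ℓ,
        (∏ i, ((q:ℝ) * (if (y i : ℕ) = (i:ℕ) then 1 else 0) - 1))
        = ∑ t ∈ (Finset.univ : Finset (Fin k)).powerset,
            (-1:ℝ)^(k - t.card) * (q:ℝ)^t.card
              * (if (∀ i ∈ t, (y i : ℕ) = (i:ℕ)) then 1 else 0) := by
      intro y
      have hsub : ∀ i : Fin k, ((q:ℝ) * (if (y i:ℕ)=(i:ℕ) then 1 else 0) - 1)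
          = ((q:ℝ) * (if (y i:ℕ)=(i:ℕ) then 1 else 0)) + (-1) := by intro i; ring
      rw [Finset.prod_congr rfl (fun i _ => hsub i), Finset.prod_add]
      apply Finset.sum_congr rfl
      intro t ht
      rw [Finset.prod_const, Finset.prod_mul_distrib, Finset.prod_const, Finset.prod_boole]
      have hcard : (Finset.univ \ t).card = k - t.card := by
        rw [Finset.card_sdiff_of_subset (Finset.subset_univ t), Finset.card_univ, Fintype.card_fin]
      rw [hcard]
      ring
    rw [Finset.sum_congr rfl (fun y _ => hprod y), Finset.sum_comm]
    apply Finset.sum_congr rfl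
    intro t ht
    rw [← Finset.mul_sum, Finset.sum_boole, Finset.filter_filter,
      card_count hkl t]
  rw [step1]
  -- group by cardinality
  rw [Finset.sum_powerset]
  have hslice : ∀ s ∈ Finset.range ((Finset.univ : Finset (Fin k)).card + 1),
      (∑ t ∈ Finset.powersetCard s (Finset.univ : Finset (Fin k)),
        (-1:ℝ)^(k - t.card) * (q:ℝ)^t.card
          * (((ℓ - t.card).descFactorial (k - t.card) : ℕ) : ℝ))
      = (k.choose s : ℝ) * ((-1:ℝ)^(k - s) * (q:ℝ)^s
          * (((ℓ - s).descFactorial (k - s) : ℕ) : ℝ)) := by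
    intro s hs
    rw [Finset.sum_congr rfl (fun t ht => by
      rw [(Finset.mem_powersetCard.mp ht).2]), Finset.sum_const,
      Finset.card_powersetCard, Finset.card_univ, Fintype.card_fin]
    simp [nsmul_eq_mul]
  rw [Finset.sum_congr rfl hslice, Finset.card_univ, Fintype.card_fin]
  rw [Taux, ← Finset.sum_range_reflect, Finset.mul_sum]
  apply Finset.sum_congr rfl
  intro s hs
  have hsk : s < k + 1 := Finset.mem_range.mp hs
  have h1 : k + 1 - 1 - s = k - s := by omega
  have h2 : k - (k - s) = s := by omega
  have h3 : k.choose (k - s) = k.choose s := Nat.choose_symm (by omega)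
  have hfac : (s + (ℓ - k)).factorial
      = (ℓ - (k - s)).descFactorial s * (ℓ - k).factorial := by
    rw [show s+(ℓ-k) = ℓ - (k - s) by omega, Nat.descFactorial_eq_factorial_mul_choose]
    have h4 := Nat.choose_mul_factorial_mul_factorial (show s ≤ ℓ - (k - s) by omega)
    rw [show (ℓ - (k - s)) - s = ℓ - k by omega] at h4
    rw [← h4]
    ring
  rw [h1, h2, h3, hfac]
  push_cast
  ring

open ED in
/-- For all integers `0 ≤ k ≤ ℓ ≤ q`, `g(k,ℓ,q) ≥ 0`. -/
theorem stmt2 (k ℓ q : ℕ) (hkl : k ≤ ℓ) (hlq : ℓ ≤ q) : 0 ≤ g k ℓ q := by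
  have h := Taux_nonneg k (ℓ - k) q (by
    have : k + (ℓ - k) = ℓ := by omega
    rw [this]; exact_mod_cast hlq)
  rw [← g_closed k ℓ q hkl] at h
  have hf : (0 : ℝ) < ((ℓ - k).factorial : ℝ) := by positivity
  nlinarith
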